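/- Let T₁, T₂ ⊆ ℝ be measurable sets whose characteristic functions χ_{T₁}, χ_{T₂} are equi-Weyl almost periodic of degree 1 (i.e. T₁, T₂ ∈ W(ℝ)). Then the characteristic functions of T₁ ∪ T₂, T₁ ∩ T₂, and T₁ \ T₂ are also equi-Weyl almost periodic of degree 1. -/

import Mathlib

open MeasureTheory

/-- A set `T ⊆ ℝ` is relatively dense. -/
def RelDense (T : Set ℝ) : Prop :=
  ∃ a > (0 : ℝ), ∀ ξ : ℝ, ∃ τ ∈ T, ξ ≤ τ ∧ τ ≤ ξ + a

/-- `f` is equi-Weyl almost periodic of degree 1 (real valued). -/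
def W1APr (f : ℝ → ℝ) : Prop :=
  ∀ ε > (0 : ℝ), ∃ l > (0 : ℝ), RelDense {τ : ℝ |
    (⨆ ξ : ℝ, (1 / l) * ∫ t in ξ..(ξ + l), |f t - f (t + τ)|) < ε}

namespace Stmt19

/-- bounded by 1 and measurable -/
structure Nice (h : ℝ → ℝ) : Prop where
  meas : Measurable h
  bdd : ∀ t, |h t| ≤ 1

theorem nice_indicator {T : Set ℝ} (hT : MeasurableSet T) :
    Nice (T.indicator fun _ => (1 : ℝ)) := by
  constructor
  · exact measurable_const.indicator hT
  · intro t
    by_cases h : t ∈ T <;> simp [Set.indicator, h]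

noncomputable def A (h : ℝ → ℝ) (l σ τ : ℝ) : ℝ :=
  ⨆ ξ : ℝ, (1 / l) * ∫ t in ξ..(ξ + l), |h (t + σ) - h (t + τ)|

section basic

variable {h h₂ : ℝ → ℝ}

theorem meas_integrand (hh : Nice h) (hh₂ : Nice h₂) (σ τ : ℝ) :
    Measurable fun t => |h (t + σ) - h₂ (t + τ)| :=
  ((hh.meas.comp (measurable_add_const σ)).sub
    (hh₂.meas.comp (measurable_add_const τ))).abs

theorem intInt (hh : Nice h) (hh₂ : Nice h₂) (σ τ a b : ℝ) :
    IntervalIntegrable (fun t => |h (t + σ) - h₂ (t + τ)|) volume a b := by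
  rw [intervalIntegrable_iff]
  apply Integrable.mono' (g := fun _ => (2 : ℝ))
    (integrableOn_const measure_Ioc_lt_top.ne)
    ((meas_integrand hh hh₂ σ τ).aestronglyMeasurable.restrict)
  refine Filter.Eventually.of_forall fun t => ?_
  rw [Real.norm_eq_abs, abs_abs]
  calc |h (t + σ) - h₂ (t + τ)| ≤ |h (t + σ)| + |h₂ (t + τ)| := abs_sub _ _
  _ ≤ 1 + 1 := add_le_add (hh.bdd _) (hh₂.bdd _)
  _ = 2 := by norm_num

theorem term_nonneg (hh : Nice h) (hh₂ : Nice h₂) {l : ℝ} (hl : 0 < l) (σ τ ξ : ℝ) :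
    0 ≤ (1 / l) * ∫ t in ξ..(ξ + l), |h (t + σ) - h₂ (t + τ)| := by
  apply mul_nonneg (by positivity)
  apply intervalIntegral.integral_nonneg (by linarith)
  intro t _; exact abs_nonneg _

theorem term_le_two (hh : Nice h) (hh₂ : Nice h₂) {l : ℝ} (hl : 0 < l) (σ τ ξ : ℝ) :
    (1 / l) * (∫ t in ξ..(ξ + l), |h (t + σ) - h₂ (t + τ)|) ≤ 2 := by
  have h1 : (∫ t in ξ..(ξ + l), |h (t + σ) - h₂ (t + τ)|)
      ≤ ∫ _t in ξ..(ξ + l), (2 : ℝ) := by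
    apply intervalIntegral.integral_mono_on (by linarith) (intInt hh hh₂ σ τ _ _)
      intervalIntegrable_const
    intro t _
    calc |h (t + σ) - h₂ (t + τ)| ≤ |h (t + σ)| + |h₂ (t + τ)| := abs_sub _ _
    _ ≤ 1 + 1 := add_le_add (hh.bdd _) (hh₂.bdd _)
    _ = 2 := by norm_num
  rw [intervalIntegral.integral_const, smul_eq_mul] at h1
  calc (1 / l) * (∫ t in ξ..(ξ + l), |h (t + σ) - h₂ (t + τ)|)
      ≤ (1 / l) * ((ξ + l - ξ) * 2) := by
        apply mul_le_mul_of_nonneg_left h1 (by positivity)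
  _ = 2 := by field_simp; ring

theorem bddAbove_range (hh : Nice h) (hh₂ : Nice h₂) {l : ℝ} (hl : 0 < l) (σ τ : ℝ) :
    BddAbove (Set.range fun ξ : ℝ =>
      (1 / l) * ∫ t in ξ..(ξ + l), |h (t + σ) - h₂ (t + τ)|) := by
  refine ⟨2, ?_⟩
  rintro x ⟨ξ, rfl⟩
  exact term_le_two hh hh₂ hl σ τ ξ

theorem A_nonneg (hh : Nice h) {l : ℝ} (hl : 0 < l) (σ τ : ℝ) : 0 ≤ A h l σ τ :=
  le_trans (term_nonneg hh hh hl σ τ 0) (le_ciSup (bddAbove_range hh hh hl σ τ) 0)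

theorem A_le {l : ℝ} {σ τ c : ℝ}
    (H : ∀ ξ : ℝ, (1 / l) * (∫ t in ξ..(ξ + l), |h (t + σ) - h (t + τ)|) ≤ c) :
    A h l σ τ ≤ c :=
  ciSup_le H

theorem term_le_A (hh : Nice h) {l : ℝ} (hl : 0 < l) (σ τ ξ : ℝ) :
    (1 / l) * (∫ t in ξ..(ξ + l), |h (t + σ) - h (t + τ)|) ≤ A h l σ τ :=
  le_ciSup (bddAbove_range hh hh hl σ τ) ξ


theorem A_shift (hh : Nice h) {l : ℝ} (hl : 0 < l) (σ τ c : ℝ) :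
    A h l (σ + c) (τ + c) = A h l σ τ := by
  have key : ∀ ξ : ℝ, (1 / l) * (∫ t in ξ..(ξ + l), |h (t + (σ + c)) - h (t + (τ + c))|)
      = (1 / l) * ∫ t in (ξ + c)..((ξ + c) + l), |h (t + σ) - h (t + τ)| := by
    intro ξ
    congr 1
    have e1 : (fun t => |h (t + (σ + c)) - h (t + (τ + c))|)
        = fun t => |h ((t + c) + σ) - h ((t + c) + τ)| := by
      funext t; rw [show t + (σ + c) = t + c + σ by ring, show t + (τ + c) = t + c + τ by ring]
    rw [e1, intervalIntegral.integral_comp_add_right (fun t => |h (t + σ) - h (t + τ)|) c,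
      show ξ + l + c = ξ + c + l by ring]
  unfold A
  simp only [key]
  exact (Equiv.addRight c).iSup_comp
    (g := fun ξ => (1 / l) * ∫ t in ξ..(ξ + l), |h (t + σ) - h (t + τ)|)

theorem A_symm {l σ τ : ℝ} : A h l σ τ = A h l τ σ := by
  unfold A
  congr 1; funext ξ; congr 1
  apply intervalIntegral.integral_congr
  intro t _; exact abs_sub_comm _ _

theorem A_zero (hh : Nice h) {l : ℝ} (hl : 0 < l) (τ : ℝ) :
    A h l 0 τ = ⨆ ξ : ℝ, (1 / l) * ∫ t in ξ..(ξ + l), |h t - h (t + τ)| := by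
  unfold A
  congr 1; funext ξ; congr 1
  apply intervalIntegral.integral_congr
  intro t _; simp

theorem A_triangle (hh : Nice h) {l : ℝ} (hl : 0 < l) (σ ρ τ : ℝ) :
    A h l σ τ ≤ A h l σ ρ + A h l ρ τ := by
  apply A_le
  intro ξ
  have hint : (∫ t in ξ..(ξ + l), |h (t + σ) - h (t + τ)|)
      ≤ ∫ t in ξ..(ξ + l), (|h (t + σ) - h (t + ρ)| + |h (t + ρ) - h (t + τ)|) := by
    apply intervalIntegral.integral_mono_on (by linarith) (intInt hh hh σ τ _ _)
      ((intInt hh hh σ ρ _ _).add (intInt hh hh ρ τ _ _))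
    intro t _
    exact abs_sub_le _ _ _
  rw [intervalIntegral.integral_add (intInt hh hh σ ρ _ _) (intInt hh hh ρ τ _ _)] at hint
  calc (1 / l) * (∫ t in ξ..(ξ + l), |h (t + σ) - h (t + τ)|)
      ≤ (1 / l) * ((∫ t in ξ..(ξ + l), |h (t + σ) - h (t + ρ)|)
        + ∫ t in ξ..(ξ + l), |h (t + ρ) - h (t + τ)|) :=
        mul_le_mul_of_nonneg_left hint (by positivity)
  _ = (1 / l) * (∫ t in ξ..(ξ + l), |h (t + σ) - h (t + ρ)|)
        + (1 / l) * ∫ t in ξ..(ξ + l), |h (t + ρ) - h (t + τ)| := by ring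
  _ ≤ A h l σ ρ + A h l ρ τ := add_le_add (term_le_A hh hl σ ρ ξ) (term_le_A hh hl ρ τ ξ)

theorem chunk_bound (hh : Nice h) {l : ℝ} (hl : 0 < l) (σ τ ξ : ℝ) (n : ℕ) :
    (∫ t in ξ..(ξ + n * l), |h (t + σ) - h (t + τ)|) ≤ n * (l * A h l σ τ) := by
  induction n with
  | zero => simp
  | succ n ih =>
    have hsplit : (∫ t in ξ..(ξ + (n + 1 : ℕ) * l), |h (t + σ) - h (t + τ)|)
        = (∫ t in ξ..(ξ + n * l), |h (t + σ) - h (t + τ)|)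
          + ∫ t in (ξ + n * l)..(ξ + (n + 1 : ℕ) * l), |h (t + σ) - h (t + τ)| :=
      (intervalIntegral.integral_add_adjacent_intervals (intInt hh hh σ τ _ _)
        (intInt hh hh σ τ _ _)).symm
    have hlast : (∫ t in (ξ + n * l)..(ξ + (n + 1 : ℕ) * l), |h (t + σ) - h (t + τ)|)
        ≤ l * A h l σ τ := by
      have := term_le_A hh hl σ τ (ξ + n * l)
      rw [show ξ + n * l + l = ξ + (n + 1 : ℕ) * l by push_cast; ring] at this
      calc (∫ t in (ξ + n * l)..(ξ + (n + 1 : ℕ) * l), |h (t + σ) - h (t + τ)|)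
          = l * ((1 / l) * ∫ t in (ξ + n * l)..(ξ + (n + 1 : ℕ) * l),
              |h (t + σ) - h (t + τ)|) := by field_simp
      _ ≤ l * A h l σ τ := mul_le_mul_of_nonneg_left this (le_of_lt hl)
    rw [hsplit]
    push_cast at ih hlast ⊢
    linarith

theorem A_window_mono (hh : Nice h) {l L : ℝ} (hl : 0 < l) (hlL : l ≤ L) (σ τ : ℝ) :
    A h L σ τ ≤ 2 * A h l σ τ := by
  have hL : 0 < L := lt_of_lt_of_le hl hlL
  apply A_le
  intro ξ
  set n : ℕ := ⌈L / l⌉₊ with hn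
  have hLn : L ≤ n * l := by
    rw [hn]
    calc L = (L / l) * l := by field_simp
    _ ≤ (⌈L / l⌉₊ : ℝ) * l := by
        apply mul_le_mul_of_nonneg_right (Nat.le_ceil _) (le_of_lt hl)
  have hnl : (n : ℝ) * l ≤ 2 * L := by
    have h1 : (n : ℝ) ≤ L / l + 1 := by
      apply le_of_lt
      exact_mod_cast Nat.ceil_lt_add_one (by positivity)
    calc (n : ℝ) * l ≤ (L / l + 1) * l := mul_le_mul_of_nonneg_right h1 (le_of_lt hl)
    _ = L + l := by field_simp
    _ ≤ 2 * L := by linarith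
  have h1 : (∫ t in ξ..(ξ + L), |h (t + σ) - h (t + τ)|)
      ≤ ∫ t in ξ..(ξ + n * l), |h (t + σ) - h (t + τ)| := by
    apply intervalIntegral.integral_mono_interval (le_refl ξ) (by linarith) (by linarith)
      (Filter.Eventually.of_forall fun t => abs_nonneg _) (intInt hh hh σ τ _ _)
  have h2 := chunk_bound hh hl σ τ ξ n
  have hA := A_nonneg hh hl σ τ
  calc (1 / L) * (∫ t in ξ..(ξ + L), |h (t + σ) - h (t + τ)|)
      ≤ (1 / L) * ((n : ℝ) * (l * A h l σ τ)) := by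
        apply mul_le_mul_of_nonneg_left (le_trans h1 h2) (by positivity)
  _ ≤ (1 / L) * (2 * L * A h l σ τ) := by
        apply mul_le_mul_of_nonneg_left _ (by positivity)
        calc (n : ℝ) * (l * A h l σ τ) = ((n : ℝ) * l) * A h l σ τ := by ring
        _ ≤ 2 * L * A h l σ τ := mul_le_mul_of_nonneg_right hnl hA
  _ = 2 * A h l σ τ := by field_simp


theorem A_le_compact_window (hh : Nice h) {l a p : ℝ} (hl : 0 < l) {E : Set ℝ}
    (hE : ∀ s ∈ E, A h l 0 s ≤ p)
    (hdense : ∀ ξ : ℝ, ∃ s ∈ E, ξ ≤ s ∧ s ≤ ξ + a) (u v : ℝ) :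
    A h l u v ≤ 2 * p + (1 / l) * ∫ t in (-a)..l, |h (t + u) - h (t + v)| := by
  apply A_le
  intro ξ
  obtain ⟨s, hsE, hs1, hs2⟩ := hdense ξ
  have hsp : A h l 0 s ≤ p := hE s hsE
  have t1 : (1 / l) * (∫ t in ξ..(ξ + l), |h (t + u) - h (t + (u - s))|) ≤ p := by
    refine le_trans (term_le_A hh hl u (u - s) ξ) ?_
    have : A h l u (u - s) = A h l s 0 := by
      have := A_shift hh hl s 0 (u - s)
      rwa [show s + (u - s) = u by ring, zero_add] at this
    rw [this, A_symm]; exact hsp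
  have t3 : (1 / l) * (∫ t in ξ..(ξ + l), |h (t + (v - s)) - h (t + v)|) ≤ p := by
    refine le_trans (term_le_A hh hl (v - s) v ξ) ?_
    have : A h l (v - s) v = A h l 0 s := by
      have := A_shift hh hl 0 s (v - s)
      rwa [show s + (v - s) = v by ring, zero_add] at this
    rw [this]; exact hsp
  have t2 : (1 / l) * (∫ t in ξ..(ξ + l), |h (t + (u - s)) - h (t + (v - s))|)
      ≤ (1 / l) * ∫ t in (-a)..l, |h (t + u) - h (t + v)| := by
    apply mul_le_mul_of_nonneg_left _ (by positivity)
    have e1 : (∫ t in ξ..(ξ + l), |h (t + (u - s)) - h (t + (v - s))|)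
        = ∫ t in (ξ - s)..(ξ + l - s), |h (t + u) - h (t + v)| := by
      rw [← intervalIntegral.integral_comp_sub_right (fun t => |h (t + u) - h (t + v)|) s]
      apply intervalIntegral.integral_congr
      intro t _
      show |h (t + (u - s)) - h (t + (v - s))| = |h (t - s + u) - h (t - s + v)|
      rw [show t - s + u = t + (u - s) by ring, show t - s + v = t + (v - s) by ring]
    rw [e1]
    apply intervalIntegral.integral_mono_interval (by linarith) (by linarith) (by linarith)
      (Filter.Eventually.of_forall fun t => abs_nonneg _) (intInt hh hh u v _ _)
  have hmono : (∫ t in ξ..(ξ + l), |h (t + u) - h (t + v)|)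
      ≤ ∫ t in ξ..(ξ + l), (|h (t + u) - h (t + (u - s))|
          + |h (t + (u - s)) - h (t + (v - s))| + |h (t + (v - s)) - h (t + v)|) := by
    apply intervalIntegral.integral_mono_on (by linarith) (intInt hh hh u v _ _)
      (((intInt hh hh u (u - s) _ _).add (intInt hh hh (u - s) (v - s) _ _)).add
        (intInt hh hh (v - s) v _ _))
    intro t _
    calc |h (t + u) - h (t + v)|
        ≤ |h (t + u) - h (t + (v - s))| + |h (t + (v - s)) - h (t + v)| := abs_sub_le _ _ _
    _ ≤ (|h (t + u) - h (t + (u - s))| + |h (t + (u - s)) - h (t + (v - s))|)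
          + |h (t + (v - s)) - h (t + v)| :=
        add_le_add (abs_sub_le _ _ _) le_rfl
  rw [intervalIntegral.integral_add ((intInt hh hh u (u - s) _ _).add
      (intInt hh hh (u - s) (v - s) _ _)) (intInt hh hh (v - s) v _ _),
    intervalIntegral.integral_add (intInt hh hh u (u - s) _ _)
      (intInt hh hh (u - s) (v - s) _ _)] at hmono
  have hfinal : (1 / l) * (∫ t in ξ..(ξ + l), |h (t + u) - h (t + v)|)
      ≤ (1 / l) * (∫ t in ξ..(ξ + l), |h (t + u) - h (t + (u - s))|)
        + (1 / l) * (∫ t in ξ..(ξ + l), |h (t + (u - s)) - h (t + (v - s))|)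
        + (1 / l) * (∫ t in ξ..(ξ + l), |h (t + (v - s)) - h (t + v)|) := by
    have := mul_le_mul_of_nonneg_left hmono (by positivity : (0:ℝ) ≤ 1 / l)
    linarith [this]
  linarith

end basic

/-- L¹ continuity of translation for indicators, on a window. -/
theorem shift_cont {T : Set ℝ} (hT : MeasurableSet T) (c d : ℝ) (hcd : c ≤ d) {η : ℝ}
    (hη : 0 < η) :
    ∃ δ > (0 : ℝ), ∀ v : ℝ, |v| ≤ δ →
      (∫ t in c..d, |(T.indicator fun _ => (1:ℝ)) (t + v)
        - (T.indicator fun _ => (1:ℝ)) t|) ≤ η := by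
  set h : ℝ → ℝ := T.indicator fun _ => (1:ℝ) with hh
  set T' : Set ℝ := T ∩ Set.Ioc (c - 1) (d + 1) with hT'
  set h' : ℝ → ℝ := T'.indicator fun _ => (1:ℝ) with hh'
  have hT'meas : MeasurableSet T' := hT.inter measurableSet_Ioc
  have hT'fin : volume T' < ⊤ :=
    lt_of_le_of_lt (measure_mono Set.inter_subset_right) measure_Ioc_lt_top
  have hInt : Integrable h' := by
    rw [hh', integrable_indicator_iff hT'meas]
    exact integrableOn_const hT'fin.ne
  obtain ⟨g, hgsupp, hgapprox, hgcont, hgint⟩ :=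
    hInt.exists_hasCompactSupport_integral_sub_le (show (0:ℝ) < η/4 by linarith)
  -- support radius
  obtain ⟨r, hr⟩ := hgsupp.isBounded.subset_closedBall 0
  set R : ℝ := |r| + 1 with hR
  have hRpos : 0 < R := by positivity
  have hsupp : ∀ x : ℝ, ¬ |x| ≤ R → g x = 0 := by
    intro x hx
    apply image_eq_zero_of_notMem_tsupport
    intro hmem
    exact hx (le_trans (by simpa [Real.dist_eq] using hr hmem)
      (by rw [hR]; exact le_of_lt (lt_add_of_le_of_pos (le_abs_self r) one_pos)))
  -- uniform continuity of g
  have hgu : UniformContinuous g := hgsupp.uniformContinuous_of_continuous hgcont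
  set η' : ℝ := η / (4 * (2 * (R + 1) + 1)) with hη'
  have hη'pos : 0 < η' := by rw [hη']; positivity
  obtain ⟨δ₀, hδ₀pos, hδ₀⟩ := Metric.uniformContinuous_iff.1 hgu η' hη'pos
  refine ⟨min (δ₀ / 2) (1 / 2), by positivity, ?_⟩
  intro v hv
  have hv1 : |v| ≤ 1 / 2 := le_trans hv (min_le_right _ _)
  have hvδ : |v| < δ₀ := lt_of_le_of_lt (le_trans hv (min_le_left _ _)) (by linarith)
  -- Step A : replace h by h' on the window
  have stepA : (∫ t in c..d, |h (t + v) - h t|) = ∫ t in c..d, |h' (t + v) - h' t| := by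
    apply intervalIntegral.integral_congr
    intro t ht
    rw [Set.uIcc_of_le hcd] at ht
    obtain ⟨ht1, ht2⟩ := ht
    have habs := abs_le.1 hv1
    have e1 : h t = h' t := by
      rw [hh, hh', hT']
      by_cases hmem : t ∈ T
      · rw [Set.indicator_of_mem hmem, Set.indicator_of_mem
          (Set.mem_inter hmem (Set.mem_Ioc.2 ⟨by linarith, by linarith⟩))]
      · rw [Set.indicator_of_notMem hmem, Set.indicator_of_notMem
          (fun hc => hmem hc.1)]
    have e2 : h (t + v) = h' (t + v) := by
      rw [hh, hh', hT']
      by_cases hmem : t + v ∈ T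
      · rw [Set.indicator_of_mem hmem, Set.indicator_of_mem
          (Set.mem_inter hmem (Set.mem_Ioc.2 ⟨by linarith, by linarith⟩))]
      · rw [Set.indicator_of_notMem hmem, Set.indicator_of_notMem
          (fun hc => hmem hc.1)]
    show |h (t + v) - h t| = |h' (t + v) - h' t|
    rw [e1, e2]
  -- integrability facts
  have hIntv : Integrable (fun x => h' (x + v)) := hInt.comp_add_right v
  have hgintv : Integrable (fun x => g (x + v)) := hgint.comp_add_right v
  have hF1 : Integrable (fun x => |h' (x + v) - g (x + v)|) := by
    have := (hIntv.sub hgintv).norm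
    simpa [Real.norm_eq_abs] using this
  have hF2 : Integrable (fun x => |g (x + v) - g x|) := by
    have := (hgintv.sub hgint).norm
    simpa [Real.norm_eq_abs] using this
  have hF3 : Integrable (fun x => |g x - h' x|) := by
    have := (hgint.sub hInt).norm
    simpa [Real.norm_eq_abs] using this
  have hF : Integrable (fun x => |h' (x + v) - h' x|) := by
    have := (hIntv.sub hInt).norm
    simpa [Real.norm_eq_abs] using this
  -- Step B : window integral ≤ global integral
  have stepB : (∫ t in c..d, |h' (t + v) - h' t|) ≤ ∫ x, |h' (x + v) - h' x| := by
    rw [intervalIntegral.integral_of_le hcd]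
    exact setIntegral_le_integral hF (Filter.Eventually.of_forall fun x => abs_nonneg _)
  -- Step C : three-term bound
  have stepC : (∫ x, |h' (x + v) - h' x|)
      ≤ (∫ x, |h' (x + v) - g (x + v)|) + (∫ x, |g (x + v) - g x|)
        + ∫ x, |g x - h' x| := by
    have hmono : (∫ x, |h' (x + v) - h' x|)
        ≤ ∫ x, (|h' (x + v) - g (x + v)| + |g (x + v) - g x| + |g x - h' x|) := by
      apply integral_mono hF ((hF1.add hF2).add hF3)
      intro x
      calc |h' (x + v) - h' x| ≤ |h' (x + v) - g x| + |g x - h' x| := abs_sub_le _ _ _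
      _ ≤ (|h' (x + v) - g (x + v)| + |g (x + v) - g x|) + |g x - h' x| :=
          add_le_add (abs_sub_le _ _ _) le_rfl
    have hF12 : Integrable (fun x => |h' (x + v) - g (x + v)| + |g (x + v) - g x|) :=
      hF1.add hF2
    rwa [integral_add hF12 hF3, integral_add hF1 hF2] at hmono
  -- term 1 and 3
  have t1 : (∫ x, |h' (x + v) - g (x + v)|) ≤ η / 4 := by
    have e : (∫ x, |h' (x + v) - g (x + v)|) = ∫ x, |h' x - g x| :=
      integral_add_right_eq_self (fun x => |h' x - g x|) v
    rw [e]
    simpa [Real.norm_eq_abs] using hgapprox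
  have t3 : (∫ x, |g x - h' x|) ≤ η / 4 := by
    have e : (∫ x, |g x - h' x|) = ∫ x, |h' x - g x| := by
      congr 1; funext x; exact abs_sub_comm _ _
    rw [e]
    simpa [Real.norm_eq_abs] using hgapprox
  -- term 2
  have t2 : (∫ x, |g (x + v) - g x|) ≤ η / 2 := by
    have hptwise : ∀ x : ℝ, |g (x + v) - g x|
        ≤ (Set.Icc (-(R+1)) (R+1)).indicator (fun _ => η') x := by
      intro x
      by_cases hx : x ∈ Set.Icc (-(R+1)) (R+1)
      · rw [Set.indicator_of_mem hx]
        apply le_of_lt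
        have : dist (x + v) x < δ₀ := by
          rw [Real.dist_eq]; simpa using hvδ
        simpa [Real.dist_eq] using hδ₀ this
      · rw [Set.indicator_of_notMem hx]
        rw [Set.mem_Icc, not_and_or, not_le, not_le] at hx
        have hxbig : ¬ |x| ≤ R + 1 := by
          rw [abs_le, not_and_or, not_le, not_le]
          rcases hx with hx | hx
          · left; linarith
          · right; linarith
        have habs := abs_le.1 hv1
        have hg1 : g x = 0 := by
          apply hsupp; intro hc; apply hxbig
          exact le_trans hc (by linarith)
        have hg2 : g (x + v) = 0 := by
          apply hsupp
          rw [abs_le, not_and_or, not_le, not_le]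
          rw [abs_le, not_and_or, not_le, not_le] at hxbig
          rcases hxbig with hx' | hx'
          · left; linarith
          · right; linarith
        rw [hg1, hg2]; simp
    have hindint : Integrable ((Set.Icc (-(R+1)) (R+1)).indicator (fun _ => η')) := by
      rw [integrable_indicator_iff measurableSet_Icc]
      exact integrableOn_const measure_Icc_lt_top.ne
    calc (∫ x, |g (x + v) - g x|)
        ≤ ∫ x, (Set.Icc (-(R+1)) (R+1)).indicator (fun _ => η') x :=
          integral_mono hF2 hindint hptwise
    _ = η' * (volume (Set.Icc (-(R+1)) (R+1))).toReal := by
        rw [integral_indicator_const _ measurableSet_Icc]; simp [mul_comm, ENNReal.toReal_ofReal']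
    _ = η' * (2 * (R + 1)) := by
        rw [Real.volume_Icc, ENNReal.toReal_ofReal (by linarith)]
        ring_nf
    _ ≤ η' * (2 * (R + 1) + 1) := by nlinarith
    _ ≤ η / 2 := by
        rw [hη']
        rw [div_mul_eq_mul_div, div_le_div_iff₀ (by positivity) (by norm_num)]
        nlinarith
  calc (∫ t in c..d, |h (t + v) - h t|) = ∫ t in c..d, |h' (t + v) - h' t| := stepA
  _ ≤ ∫ x, |h' (x + v) - h' x| := stepB
  _ ≤ (∫ x, |h' (x + v) - g (x + v)|) + (∫ x, |g (x + v) - g x|) + ∫ x, |g x - h' x| := stepC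
  _ ≤ η / 4 + η / 2 + η / 4 := by linarith
  _ = η := by ring

/-- Finite net for translates over a compact parameter interval. -/
theorem net_lemma {T : Set ℝ} (hT : MeasurableSet T) (a l Amax η : ℝ) (hal : -a ≤ l)
    (hη : 0 < η) :
    ∃ N : Finset ℝ, ∀ u ∈ Set.Icc (0:ℝ) Amax, ∃ w ∈ N,
      (∫ t in (-a)..l, |(T.indicator fun _ => (1:ℝ)) (t + u)
        - (T.indicator fun _ => (1:ℝ)) (t + w)|) ≤ η := by
  set h : ℝ → ℝ := T.indicator fun _ => (1:ℝ) with hh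
  have hcont : ∀ u₀ : ℝ, ∃ δ > (0:ℝ), ∀ v : ℝ, |v| ≤ δ →
      (∫ t in (-a + u₀)..(l + u₀), |h (t + v) - h t|) ≤ η :=
    fun u₀ => shift_cont hT (-a + u₀) (l + u₀) (by linarith) hη
  choose δ hδpos hδ using hcont
  obtain ⟨N, hNmem, hNcover⟩ := (isCompact_Icc (a := (0:ℝ)) (b := Amax)).elim_nhds_subcover
    (fun u₀ => Metric.ball u₀ (δ u₀)) (fun u₀ _ => Metric.ball_mem_nhds u₀ (hδpos u₀))
  refine ⟨N, ?_⟩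
  intro u hu
  obtain ⟨w, hwN, hw⟩ := Set.mem_iUnion₂.1 (hNcover hu)
  refine ⟨w, hwN, ?_⟩
  have hdist : |u - w| ≤ δ w := le_of_lt (by simpa [Real.dist_eq] using hw)
  have key := hδ w (u - w) hdist
  have e : (∫ t in (-a)..l, |h (t + u) - h (t + w)|)
      = ∫ t in (-a + w)..(l + w), |h (t + (u - w)) - h t| := by
    rw [← intervalIntegral.integral_comp_add_right (fun t => |h (t + (u - w)) - h t|) w]
    apply intervalIntegral.integral_congr
    intro t _
    show |h (t + u) - h (t + w)| = |h (t + w + (u - w)) - h (t + w)|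
    rw [show t + w + (u - w) = t + u by ring]
  rw [e]
  exact key

theorem common_periods {T₁ T₂ : Set ℝ} (h₁ : MeasurableSet T₁) (h₂ : MeasurableSet T₂)
    (hW₁ : W1APr (T₁.indicator fun _ => (1 : ℝ)))
    (hW₂ : W1APr (T₂.indicator fun _ => (1 : ℝ))) :
    ∀ ε > (0:ℝ), ∃ l > (0:ℝ), RelDense {τ : ℝ |
      A (T₁.indicator fun _ => (1:ℝ)) l 0 τ < ε
        ∧ A (T₂.indicator fun _ => (1:ℝ)) l 0 τ < ε} := by
  intro ε hε
  set f : ℝ → ℝ := T₁.indicator fun _ => (1:ℝ) with hfdef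
  set g : ℝ → ℝ := T₂.indicator fun _ => (1:ℝ) with hgdef
  have hNf : Nice f := nice_indicator h₁
  have hNg : Nice g := nice_indicator h₂
  set ε' : ℝ := ε / 15 with hε'def
  have hε'pos : 0 < ε' := by rw [hε'def]; positivity
  obtain ⟨l₁, hl₁pos, hRD₁⟩ := hW₁ ε' hε'pos
  obtain ⟨l₂, hl₂pos, hRD₂⟩ := hW₂ ε' hε'pos
  obtain ⟨a₁, ha₁pos, hdense₁⟩ := hRD₁
  obtain ⟨a₂, ha₂pos, hdense₂⟩ := hRD₂
  set l : ℝ := max l₁ l₂ with hldef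
  have hl : 0 < l := lt_of_lt_of_le hl₁pos (le_max_left _ _)
  have hdense₁' : ∀ ξ : ℝ, ∃ s ∈ {s : ℝ | A f l 0 s ≤ 2*ε'}, ξ ≤ s ∧ s ≤ ξ + a₁ := by
    intro ξ
    obtain ⟨s, hsmem, hs1, hs2⟩ := hdense₁ ξ
    refine ⟨s, ?_, hs1, hs2⟩
    have hs' : A f l₁ 0 s < ε' := by
      rw [A_zero hNf hl₁pos]; exact hsmem
    show A f l 0 s ≤ 2*ε'
    calc A f l 0 s ≤ 2 * A f l₁ 0 s := A_window_mono hNf hl₁pos (le_max_left _ _) 0 s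
    _ ≤ 2*ε' := by linarith
  have hdense₂' : ∀ ξ : ℝ, ∃ s ∈ {s : ℝ | A g l 0 s ≤ 2*ε'}, ξ ≤ s ∧ s ≤ ξ + a₂ := by
    intro ξ
    obtain ⟨s, hsmem, hs1, hs2⟩ := hdense₂ ξ
    refine ⟨s, ?_, hs1, hs2⟩
    have hs' : A g l₂ 0 s < ε' := by
      rw [A_zero hNg hl₂pos]; exact hsmem
    show A g l 0 s ≤ 2*ε'
    calc A g l 0 s ≤ 2 * A g l₂ 0 s := A_window_mono hNg hl₂pos (le_max_right _ _) 0 s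
    _ ≤ 2*ε' := by linarith
  have hcw₁ : ∀ u v : ℝ, A f l u v
      ≤ 2*(2*ε') + (1/l) * ∫ t in (-a₁)..l, |f (t + u) - f (t + v)| :=
    fun u v => A_le_compact_window hNf hl (fun s hs => hs) hdense₁' u v
  have hcw₂ : ∀ u v : ℝ, A g l u v
      ≤ 2*(2*ε') + (1/l) * ∫ t in (-a₂)..l, |g (t + u) - g (t + v)| :=
    fun u v => A_le_compact_window hNg hl (fun s hs => hs) hdense₂' u v
  obtain ⟨N₁, hN₁⟩ := net_lemma h₁ a₁ l a₁ (ε' * l) (by linarith) (by positivity)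
  obtain ⟨N₂, hN₂⟩ := net_lemma h₂ a₂ l (a₁ + a₂) (ε' * l) (by linarith) (by positivity)
  have hholdsεl : (1/l) * (ε' * l) = ε' := by field_simp
  have hclass : ∀ τ : ℝ, ∃ w₁ ∈ N₁, ∃ w₂ ∈ N₂,
      A f l τ w₁ ≤ 7*ε' ∧ A g l τ w₂ ≤ 7*ε' := by
    intro τ
    obtain ⟨s, hsA, hs1, hs2⟩ := hdense₁' (τ - a₁)
    have hsA : A f l 0 s ≤ 2*ε' := hsA
    set u : ℝ := τ - s with hudef
    have hu : u ∈ Set.Icc (0:ℝ) a₁ := ⟨by simp [hudef]; linarith, by simp [hudef]; linarith⟩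
    obtain ⟨w₁, hw₁N, hw₁⟩ := hN₁ u hu
    have hAfu : A f l τ u ≤ 2*ε' := by
      have h0 := A_shift hNf hl s 0 u
      rw [zero_add, show s + u = τ by rw [hudef]; ring] at h0
      rw [h0, A_symm]
      exact hsA
    have hAfuw : A f l u w₁ ≤ 5*ε' := by
      calc A f l u w₁ ≤ 2*(2*ε') + (1/l) * ∫ t in (-a₁)..l, |f (t + u) - f (t + w₁)| :=
        hcw₁ u w₁
      _ ≤ 2*(2*ε') + (1/l) * (ε' * l) := by
          have := mul_le_mul_of_nonneg_left hw₁ (by positivity : (0:ℝ) ≤ 1/l)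
          linarith
      _ = 5*ε' := by rw [hholdsεl]; ring
    have hAf : A f l τ w₁ ≤ 7*ε' :=
      le_trans (A_triangle hNf hl τ u w₁) (by linarith)
    obtain ⟨s₂, hs₂A, hs₂1, hs₂2⟩ := hdense₂' (s - a₂)
    have hs₂A : A g l 0 s₂ ≤ 2*ε' := hs₂A
    set v : ℝ := (s - s₂) + u with hvdef
    have hv : v ∈ Set.Icc (0:ℝ) (a₁ + a₂) := by
      constructor
      · have := hu.1; simp at this ⊢; rw [hvdef]; simp [hudef] at this ⊢; linarith
      · have := hu.2; rw [hvdef]; simp [hudef] at this ⊢; linarith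
    obtain ⟨w₂, hw₂N, hw₂⟩ := hN₂ v hv
    have hAgv : A g l τ v ≤ 2*ε' := by
      have h0 := A_shift hNg hl s (s - s₂) u
      rw [show s + u = τ by rw [hudef]; ring] at h0
      have h0' := A_shift hNg hl s₂ 0 (s - s₂)
      rw [zero_add, show s₂ + (s - s₂) = s by ring] at h0'
      rw [hvdef, h0, h0', A_symm]
      exact hs₂A
    have hAgvw : A g l v w₂ ≤ 5*ε' := by
      calc A g l v w₂ ≤ 2*(2*ε') + (1/l) * ∫ t in (-a₂)..l, |g (t + v) - g (t + w₂)| :=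
        hcw₂ v w₂
      _ ≤ 2*(2*ε') + (1/l) * (ε' * l) := by
          have := mul_le_mul_of_nonneg_left hw₂ (by positivity : (0:ℝ) ≤ 1/l)
          linarith
      _ = 5*ε' := by rw [hholdsεl]; ring
    have hAg : A g l τ w₂ ≤ 7*ε' :=
      le_trans (A_triangle hNg hl τ v w₂) (by linarith)
    exact ⟨w₁, hw₁N, w₂, hw₂N, hAf, hAg⟩
  choose w₁f hw₁mem w₂f hw₂mem hbf hbg using hclass
  set E : Set ℝ := {τ : ℝ | A f l 0 τ < ε ∧ A g l 0 τ < ε} with hEdef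
  have hsame : ∀ τ τ' : ℝ, w₁f τ = w₁f τ' → w₂f τ = w₂f τ' → (τ' - τ) ∈ E := by
    intro τ τ' e1 e2
    have key : ∀ (h : ℝ → ℝ), Nice h → ∀ w : ℝ, A h l τ w ≤ 7*ε' → A h l τ' w ≤ 7*ε' →
        A h l 0 (τ' - τ) < ε := by
      intro h hN w hb hb'
      have h0 := A_shift hN hl 0 (τ' - τ) τ
      rw [zero_add, show τ' - τ + τ = τ' by ring] at h0
      rw [← h0]
      calc A h l τ τ' ≤ A h l τ w + A h l w τ' := A_triangle hN hl τ w τ'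
      _ = A h l τ w + A h l τ' w := by rw [A_symm (σ := w)]
      _ ≤ 7*ε' + 7*ε' := add_le_add hb hb'
      _ < ε := by rw [hε'def]; linarith
    constructor
    · exact key f hNf (w₁f τ) (hbf τ) (by rw [e1]; exact hbf τ')
    · exact key g hNg (w₂f τ) (hbg τ) (by rw [e2]; exact hbg τ')
  refine ⟨l, hl, ?_⟩
  by_contra hnot
  rw [RelDense] at hnot
  push_neg at hnot
  have hgap : ∀ a : ℝ, ∃ ξ : ℝ, 0 < a → ∀ τ, τ ∈ E → ¬(ξ ≤ τ ∧ τ ≤ ξ + a) := by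
    intro a
    by_cases ha : 0 < a
    · obtain ⟨ξ, hξ⟩ := hnot a ha
      exact ⟨ξ, fun _ τ hτ hc => absurd (hξ τ hτ hc.1) (not_lt.2 hc.2)⟩
    · exact ⟨0, fun h => absurd h ha⟩
  choose ξf hξf using hgap
  set F : ℕ → ℝ × ℝ := fun k => Nat.rec ((0:ℝ), (0:ℝ))
    (fun _ p => (ξf (2 * p.2 + 2) + p.2 + 1,
      max p.2 |ξf (2 * p.2 + 2) + p.2 + 1|)) k with hFdef
  have hFsucc : ∀ k : ℕ, F (k+1) = (ξf (2 * (F k).2 + 2) + (F k).2 + 1,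
      max (F k).2 |ξf (2 * (F k).2 + 2) + (F k).2 + 1|) := fun k => rfl
  have hM0 : ∀ k, 0 ≤ (F k).2 := by
    intro k
    induction k with
    | zero => exact le_refl 0
    | succ k ih => rw [hFsucc k]; exact le_trans ih (le_max_left _ _)
  have hMle : ∀ j k : ℕ, j ≤ k → (F j).2 ≤ (F k).2 := by
    intro j k hjk
    induction k with
    | zero => rw [Nat.le_zero.1 hjk]
    | succ k ih =>
      rcases Nat.lt_or_ge j (k+1) with hc | hc
      · refine le_trans (ih (by omega)) ?_
        rw [hFsucc k]; exact le_max_left _ _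
      · rw [Nat.le_antisymm hjk hc]
  have hbound : ∀ k, |(F k).1| ≤ (F k).2 := by
    intro k
    induction k with
    | zero => simp [hFdef]
    | succ k _ => rw [hFsucc k]; exact le_max_right _ _
  have hkey : ∀ k j : ℕ, j ≤ k → (F (k+1)).1 - (F j).1 ∉ E := by
    intro k j hjk hE'
    have hxM : |(F j).1| ≤ (F k).2 := le_trans (hbound j) (hMle j k hjk)
    have hMpos : 0 ≤ (F k).2 := hM0 k
    obtain ⟨hx1, hx2⟩ := abs_le.1 hxM
    refine hξf (2 * (F k).2 + 2) (by linarith) _ hE' ⟨?_, ?_⟩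
    · rw [hFsucc k]; simp only; linarith
    · rw [hFsucc k]; simp only; linarith
  have hmaps : ∀ k ∈ Finset.range ((N₁ ×ˢ N₂).card + 1),
      (w₁f ((F k).1), w₂f ((F k).1)) ∈ N₁ ×ˢ N₂ :=
    fun k _ => Finset.mem_product.2 ⟨hw₁mem _, hw₂mem _⟩
  obtain ⟨j, hj, k, hk, hjk, heq⟩ := Finset.exists_ne_map_eq_of_card_lt_of_maps_to
    (by simp) hmaps
  have main : ∀ j k : ℕ, j < k → w₁f ((F j).1) = w₁f ((F k).1) →
      w₂f ((F j).1) = w₂f ((F k).1) → False := by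
    intro j k hjk e1 e2
    obtain ⟨m, rfl⟩ : ∃ m, k = m + 1 := ⟨k - 1, by omega⟩
    exact hkey m j (by omega) (hsame ((F j).1) ((F (m+1)).1) e1 e2)
  have e1 : w₁f ((F j).1) = w₁f ((F k).1) := congrArg Prod.fst heq
  have e2 : w₂f ((F j).1) = w₂f ((F k).1) := congrArg Prod.snd heq
  rcases lt_or_gt_of_ne hjk with hlt | hgt
  · exact main j k hlt e1 e2
  · exact main k j hgt e1.symm e2.symm

theorem A_pair_bound {k f g : ℝ → ℝ} (hk : Nice k) (hf : Nice f) (hg : Nice g)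
    (hpt : ∀ x y : ℝ, |k x - k y| ≤ |f x - f y| + |g x - g y|) {l : ℝ} (hl : 0 < l)
    (τ : ℝ) : A k l 0 τ ≤ A f l 0 τ + A g l 0 τ := by
  apply A_le
  intro ξ
  have hint : (∫ t in ξ..(ξ + l), |k (t + 0) - k (t + τ)|)
      ≤ ∫ t in ξ..(ξ + l), (|f (t + 0) - f (t + τ)| + |g (t + 0) - g (t + τ)|) := by
    apply intervalIntegral.integral_mono_on (by linarith) (intInt hk hk 0 τ _ _)
      ((intInt hf hf 0 τ _ _).add (intInt hg hg 0 τ _ _))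
    intro t _
    exact hpt _ _
  rw [intervalIntegral.integral_add (intInt hf hf 0 τ _ _) (intInt hg hg 0 τ _ _)] at hint
  calc (1 / l) * (∫ t in ξ..(ξ + l), |k (t + 0) - k (t + τ)|)
      ≤ (1 / l) * ((∫ t in ξ..(ξ + l), |f (t + 0) - f (t + τ)|)
        + ∫ t in ξ..(ξ + l), |g (t + 0) - g (t + τ)|) :=
        mul_le_mul_of_nonneg_left hint (by positivity)
  _ = (1 / l) * (∫ t in ξ..(ξ + l), |f (t + 0) - f (t + τ)|)
        + (1 / l) * ∫ t in ξ..(ξ + l), |g (t + 0) - g (t + τ)| := by ring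
  _ ≤ A f l 0 τ + A g l 0 τ := add_le_add (term_le_A hf hl 0 τ ξ) (term_le_A hg hl 0 τ ξ)

theorem pt_union (T₁ T₂ : Set ℝ) (x y : ℝ) :
    |(T₁ ∪ T₂).indicator (fun _ => (1:ℝ)) x - (T₁ ∪ T₂).indicator (fun _ => (1:ℝ)) y|
      ≤ |T₁.indicator (fun _ => (1:ℝ)) x - T₁.indicator (fun _ => (1:ℝ)) y|
        + |T₂.indicator (fun _ => (1:ℝ)) x - T₂.indicator (fun _ => (1:ℝ)) y| := by
  by_cases h1 : x ∈ T₁ <;> by_cases h2 : x ∈ T₂ <;> by_cases h3 : y ∈ T₁ <;>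
    by_cases h4 : y ∈ T₂ <;>
    simp [Set.indicator_apply, h1, h2, h3, h4] <;> norm_num

theorem pt_inter (T₁ T₂ : Set ℝ) (x y : ℝ) :
    |(T₁ ∩ T₂).indicator (fun _ => (1:ℝ)) x - (T₁ ∩ T₂).indicator (fun _ => (1:ℝ)) y|
      ≤ |T₁.indicator (fun _ => (1:ℝ)) x - T₁.indicator (fun _ => (1:ℝ)) y|
        + |T₂.indicator (fun _ => (1:ℝ)) x - T₂.indicator (fun _ => (1:ℝ)) y| := by
  by_cases h1 : x ∈ T₁ <;> by_cases h2 : x ∈ T₂ <;> by_cases h3 : y ∈ T₁ <;>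
    by_cases h4 : y ∈ T₂ <;>
    simp [Set.indicator_apply, h1, h2, h3, h4] <;> norm_num

theorem pt_diff (T₁ T₂ : Set ℝ) (x y : ℝ) :
    |(T₁ \ T₂).indicator (fun _ => (1:ℝ)) x - (T₁ \ T₂).indicator (fun _ => (1:ℝ)) y|
      ≤ |T₁.indicator (fun _ => (1:ℝ)) x - T₁.indicator (fun _ => (1:ℝ)) y|
        + |T₂.indicator (fun _ => (1:ℝ)) x - T₂.indicator (fun _ => (1:ℝ)) y| := by
  by_cases h1 : x ∈ T₁ <;> by_cases h2 : x ∈ T₂ <;> by_cases h3 : y ∈ T₁ <;>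
    by_cases h4 : y ∈ T₂ <;>
    simp [Set.indicator_apply, h1, h2, h3, h4] <;> norm_num

theorem W1APr_of_common {T₁ T₂ : Set ℝ} (h₁ : MeasurableSet T₁) (h₂ : MeasurableSet T₂)
    (hW₁ : W1APr (T₁.indicator fun _ => (1 : ℝ)))
    (hW₂ : W1APr (T₂.indicator fun _ => (1 : ℝ)))
    (S : Set ℝ) (hS : MeasurableSet S)
    (hpt : ∀ x y : ℝ, |S.indicator (fun _ => (1:ℝ)) x - S.indicator (fun _ => (1:ℝ)) y|
      ≤ |T₁.indicator (fun _ => (1:ℝ)) x - T₁.indicator (fun _ => (1:ℝ)) y|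
        + |T₂.indicator (fun _ => (1:ℝ)) x - T₂.indicator (fun _ => (1:ℝ)) y|) :
    W1APr (S.indicator fun _ => (1 : ℝ)) := by
  intro ε hε
  obtain ⟨l, hl, a, ha, hdense⟩ := common_periods h₁ h₂ hW₁ hW₂ (ε/2) (by linarith)
  refine ⟨l, hl, a, ha, ?_⟩
  intro ξ
  obtain ⟨τ, hτmem, hτ1, hτ2⟩ := hdense ξ
  obtain ⟨hA1, hA2⟩ := hτmem
  refine ⟨τ, ?_, hτ1, hτ2⟩
  show (⨆ ξ : ℝ, (1 / l) * ∫ t in ξ..(ξ + l),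
      |(S.indicator fun _ => (1:ℝ)) t - (S.indicator fun _ => (1:ℝ)) (t + τ)|) < ε
  rw [← A_zero (nice_indicator hS) hl]
  calc A (S.indicator fun _ => (1:ℝ)) l 0 τ
      ≤ A (T₁.indicator fun _ => (1:ℝ)) l 0 τ + A (T₂.indicator fun _ => (1:ℝ)) l 0 τ :=
        A_pair_bound (nice_indicator hS) (nice_indicator h₁) (nice_indicator h₂) hpt hl τ
  _ < ε/2 + ε/2 := add_lt_add hA1 hA2
  _ = ε := by ring

end Stmt19

theorem stmt19 (T₁ T₂ : Set ℝ)
    (h₁ : MeasurableSet T₁) (h₂ : MeasurableSet T₂)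
    (hW₁ : W1APr (T₁.indicator fun _ => (1 : ℝ)))
    (hW₂ : W1APr (T₂.indicator fun _ => (1 : ℝ))) :
    W1APr ((T₁ ∪ T₂).indicator fun _ => (1 : ℝ)) ∧
      W1APr ((T₁ ∩ T₂).indicator fun _ => (1 : ℝ)) ∧
      W1APr ((T₁ \ T₂).indicator fun _ => (1 : ℝ)) := by
  refine ⟨?_, ?_, ?_⟩
  · exact Stmt19.W1APr_of_common h₁ h₂ hW₁ hW₂ _ (h₁.union h₂) (Stmt19.pt_union T₁ T₂)
  · exact Stmt19.W1APr_of_common h₁ h₂ hW₁ hW₂ _ (h₁.inter h₂) (Stmt19.pt_inter T₁ T₂)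
  · exact Stmt19.W1APr_of_common h₁ h₂ hW₁ hW₂ _ (h₁.diff h₂) (Stmt19.pt_diff T₁ T₂)
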